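/- arXiv:2408.09068 — 10 statements merged into one kernel-verified Lean document; each statement's English description precedes it below -/
import Mathlib

section
/- Every LP-feasible solution (z, y) of the relaxed Formulation 2 has objective value ∑_{q} ∑_{h ∈ H} z q h ≥ 1, and there exists an LP-feasible solution whose objective value is exactly 1; that is, 1 is the least element of the set of objective values of LP-feasible solutions of Formulation 2. (Proposition 1: the optimal value of the linear programming relaxation of Formulation 2 is 1.) -/
/-- LP-feasibility for the relaxed Formulation 2 (fixed-length SF BILP). -/
def Form2LPFeasible (n p M : ℕ) (D : Fin n → ℕ) (adj : Fin n → Fin n → Prop)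
    (z : Fin p → ℕ → ℝ) (y : Fin p → ℕ → Fin n → ℝ) : Prop :=
  (∀ q : Fin p, ∀ h ∈ Finset.Icc 1 M, 0 ≤ z q h ∧ z q h ≤ 1) ∧
  (∀ q : Fin p, ∀ h ∈ Finset.Icc 1 M, ∀ b : Fin n, 0 ≤ y q h b ∧ y q h b ≤ 1) ∧
  -- (i) logic constraint
  (∀ q : Fin p, ∀ h ∈ Finset.Icc 1 M, ∀ b : Fin n, y q h b ≤ z q h) ∧
  -- (ii) one dwell time per pattern
  (∀ q : Fin p, ∑ h ∈ Finset.Icc 1 M, z q h ≤ 1) ∧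
  -- (iii) demand constraint
  (∀ b : Fin n, ∑ q : Fin p, ∑ h ∈ Finset.Icc 1 M, (h : ℝ) * y q h b = (D b : ℝ)) ∧
  -- (iv) adjacent-beam interference
  (∀ q : Fin p, ∀ h ∈ Finset.Icc 1 M, ∀ b b' : Fin n, adj b b' → y q h b + y q h b' ≤ 1)

/-- Proposition 1: the optimal value of the LP relaxation of Formulation 2 is 1. -/
theorem form2_LP_relaxation_optimal_value_one
    (n p M : ℕ) (hn : 1 ≤ n) (hp : 2 ≤ p) (hM : 1 ≤ M)
    (D : Fin n → ℕ) (hD : ∀ b, D b ≤ M) (hmax : ∃ bstar : Fin n, D bstar = M)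
    (adj : Fin n → Fin n → Prop) (hadjSymm : Symmetric adj) (hadjIrrefl : Irreflexive adj) :
    IsLeast
      { v : ℝ | ∃ (z : Fin p → ℕ → ℝ) (y : Fin p → ℕ → Fin n → ℝ),
          Form2LPFeasible n p M D adj z y ∧
          v = ∑ q : Fin p, ∑ h ∈ Finset.Icc 1 M, z q h }
      1 := by
  have hM0 : (0:ℝ) < M := by exact_mod_cast hM
  have hMmem : M ∈ Finset.Icc 1 M := Finset.mem_Icc.2 ⟨hM, le_rfl⟩
  constructor
  · -- membership: construct a feasible solution with value 1
    set q0 : Fin p := ⟨0, by omega⟩ with hq0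
    set q1 : Fin p := ⟨1, by omega⟩ with hq1
    have hq01 : q0 ≠ q1 := by simp [hq0, hq1, Fin.ext_iff]
    set T : Finset (Fin p) := {q0, q1} with hT
    -- generic sum computation
    have hsum : ∀ f : ℕ → ℝ,
        (∑ q : Fin p, ∑ h ∈ Finset.Icc 1 M, if h = M ∧ q ∈ T then f h else 0)
          = 2 * f M := by
      intro f
      have hinner : ∀ q : Fin p,
          (∑ h ∈ Finset.Icc 1 M, if h = M ∧ q ∈ T then f h else 0)
            = if q ∈ T then f M else 0 := by
        intro q
        rw [Finset.sum_congr rfl (fun h _ => by rw [ite_and]),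
          Finset.sum_ite_eq' (Finset.Icc 1 M) M (fun h => if q ∈ T then f h else 0),
          if_pos hMmem]
      rw [Finset.sum_congr rfl (fun q _ => hinner q), Finset.sum_ite_mem,
        Finset.univ_inter, hT, Finset.sum_pair hq01]
      ring
    refine ⟨fun q h => if h = M ∧ q ∈ T then 1/2 else 0,
      fun q h b => if h = M ∧ q ∈ T then (D b : ℝ)/(2*M) else 0, ?_, ?_⟩
    · refine ⟨?_, ?_, ?_, ?_, ?_, ?_⟩
      · intro q h hh
        dsimp only
        split <;> norm_num
      · intro q h hh b
        dsimp only
        split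
        · constructor
          · positivity
          · rw [div_le_one (by positivity)]
            have : (D b : ℝ) ≤ M := by exact_mod_cast hD b
            linarith
        · norm_num
      · intro q h hh b
        dsimp only
        split
        · rw [div_le_div_iff₀ (by positivity) (by norm_num)]
          have : (D b : ℝ) ≤ M := by exact_mod_cast hD b
          linarith
        · exact le_rfl
      · intro q
        dsimp only
        have hinner : (∑ h ∈ Finset.Icc 1 M, if h = M ∧ q ∈ T then (1:ℝ)/2 else 0)
            = if q ∈ T then (1:ℝ)/2 else 0 := by
          rw [Finset.sum_congr rfl (fun h _ => by rw [ite_and]),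
            Finset.sum_ite_eq' (Finset.Icc 1 M) M (fun h => if q ∈ T then (1:ℝ)/2 else 0),
            if_pos hMmem]
        rw [hinner]
        split <;> norm_num
      · intro b
        dsimp only
        have : ∀ q : Fin p, ∀ h ∈ Finset.Icc 1 M,
            (h:ℝ) * (if h = M ∧ q ∈ T then (D b : ℝ)/(2*M) else 0)
              = if h = M ∧ q ∈ T then (h:ℝ) * ((D b : ℝ)/(2*M)) else 0 := by
          intro q h hh
          split <;> simp
        rw [Finset.sum_congr rfl (fun q _ => Finset.sum_congr rfl (this q)),
          hsum (fun h => (h:ℝ) * ((D b : ℝ)/(2*M)))]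
        field_simp
      · intro q h hh b b' hbb'
        dsimp only
        have h1 : (D b : ℝ) ≤ M := by exact_mod_cast hD b
        have h2 : (D b' : ℝ) ≤ M := by exact_mod_cast hD b'
        split
        · rw [← add_div, div_le_one (by positivity)]; linarith
        · norm_num
    · rw [hsum (fun _ => (1:ℝ)/2)]
      norm_num
  · -- lower bound
    rintro v ⟨z, y, hfeas, rfl⟩
    obtain ⟨hz, hy, hyz, hzsum, hdem, hadjc⟩ := hfeas
    obtain ⟨bstar, hbstar⟩ := hmax
    have key : (M:ℝ) ≤ M * ∑ q : Fin p, ∑ h ∈ Finset.Icc 1 M, z q h := by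
      calc (M:ℝ) = ∑ q : Fin p, ∑ h ∈ Finset.Icc 1 M, (h : ℝ) * y q h bstar := by
            rw [hdem bstar, hbstar]
        _ ≤ ∑ q : Fin p, ∑ h ∈ Finset.Icc 1 M, (M:ℝ) * z q h := by
            refine Finset.sum_le_sum fun q _ => Finset.sum_le_sum fun h hh => ?_
            have hhM : (h:ℝ) ≤ M := by exact_mod_cast (Finset.mem_Icc.1 hh).2
            exact mul_le_mul hhM (hyz q h hh bstar) (hy q h hh bstar).1 hM0.le
        _ = M * ∑ q : Fin p, ∑ h ∈ Finset.Icc 1 M, z q h := by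
            rw [Finset.mul_sum]
            exact Finset.sum_congr rfl fun q _ => (Finset.mul_sum _ _ _).symm
    nlinarith
end

section
/- Assume additionally that there exists a beam b with D b ≥ 1. Then every LP-feasible solution (z, y, T, x) of the relaxed Formulation 3 has objective value ∑_q z q ≥ 1, and there exists an LP-feasible solution whose objective value is exactly 1; that is, 1 is the least element of the set of objective values of LP-feasible solutions of Formulation 3. (Proposition 2: the optimal value of the linear programming relaxation of Formulation 3 is 1.) -/
/-- LP-feasibility for the relaxed Formulation 3 (flexible-length SF MILP). -/
def Form3LPFeasible (n p M : ℕ) (D : Fin n → ℕ) (adj : Fin n → Fin n → Prop)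
    (z : Fin p → ℝ) (y : Fin p → Fin n → ℝ) (T : Fin p → ℝ) (x : Fin p → Fin n → ℝ) : Prop :=
  (∀ q : Fin p, 0 ≤ z q ∧ z q ≤ 1) ∧
  (∀ q : Fin p, ∀ b : Fin n, 0 ≤ y q b ∧ y q b ≤ 1) ∧
  (∀ q : Fin p, 0 ≤ T q) ∧
  (∀ q : Fin p, ∀ b : Fin n, 0 ≤ x q b) ∧
  -- (i) logic constraint
  (∀ q : Fin p, ∀ b : Fin n, y q b ≤ z q) ∧
  -- (ii) logic constraint on durations
  (∀ q : Fin p, ∀ b : Fin n, x q b ≤ (D b : ℝ) * y q b) ∧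
  -- (iii) demand constraint
  (∀ b : Fin n, ∑ q : Fin p, x q b = (D b : ℝ)) ∧
  -- (iv) and (v): equal dwell time within a pattern
  (∀ q : Fin p, ∀ b : Fin n, x q b ≤ T q + (M : ℝ) * (1 - y q b)) ∧
  (∀ q : Fin p, ∀ b : Fin n, T q - (M : ℝ) * (1 - y q b) ≤ x q b) ∧
  -- (vi) adjacent-beam interference
  (∀ q : Fin p, ∀ b b' : Fin n, adj b b' → y q b + y q b' ≤ 1)

/-- Integer feasibility for Formulation 3: LP-feasible with binary `z` and `y`. -/
def Form3IntFeasible (n p M : ℕ) (D : Fin n → ℕ) (adj : Fin n → Fin n → Prop)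
    (z : Fin p → ℝ) (y : Fin p → Fin n → ℝ) (T : Fin p → ℝ) (x : Fin p → Fin n → ℝ) : Prop :=
  Form3LPFeasible n p M D adj z y T x ∧
  (∀ q : Fin p, z q = 0 ∨ z q = 1) ∧
  (∀ q : Fin p, ∀ b : Fin n, y q b = 0 ∨ y q b = 1)

/-- Proposition 2: the optimal value of the LP relaxation of Formulation 3 is 1. -/
theorem form3_LP_relaxation_optimal_value_one
    (n p M : ℕ) (hn : 1 ≤ n) (hp : 2 ≤ p) (hM : 1 ≤ M)
    (D : Fin n → ℕ) (hD : ∀ b, D b ≤ M) (hpos : ∃ b : Fin n, 1 ≤ D b)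
    (adj : Fin n → Fin n → Prop) (hadjSymm : Symmetric adj) (hadjIrrefl : Irreflexive adj) :
    IsLeast
      { v : ℝ | ∃ (z : Fin p → ℝ) (y : Fin p → Fin n → ℝ) (T : Fin p → ℝ)
          (x : Fin p → Fin n → ℝ),
          Form3LPFeasible n p M D adj z y T x ∧ v = ∑ q : Fin p, z q }
      1 := by
  have hp0 : (0:ℝ) < p := by exact_mod_cast lt_of_lt_of_le (by norm_num) hp
  have hp2 : (2:ℝ) ≤ p := by exact_mod_cast hp
  have hM1 : (1:ℝ) ≤ M := by exact_mod_cast hM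
  constructor
  · refine ⟨fun _ => 1 / p, fun _ _ => 1 / p, fun _ => 0, fun _ b => (D b : ℝ) / p, ?_, ?_⟩
    · refine ⟨fun q => ⟨by positivity, ?_⟩, fun q b => ⟨by positivity, ?_⟩,
        fun q => le_refl 0, fun q b => by positivity, fun q b => le_refl _,
        fun q b => by rw [mul_one_div], fun b => ?_, fun q b => ?_, fun q b => ?_,
        fun q b b' _ => ?_⟩
      · rw [div_le_one hp0]; linarith
      · rw [div_le_one hp0]; linarith
      · rw [Finset.sum_const, Finset.card_univ, Fintype.card_fin, nsmul_eq_mul]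
        field_simp
      · have hDb : (D b : ℝ) ≤ M := by exact_mod_cast hD b
        rw [zero_add, div_le_iff₀ hp0]
        have hpp : (1 - 1/(p:ℝ)) * p = p - 1 := by field_simp
        simp only []
        nlinarith [hpp]
      · have : 1 - 1/(p:ℝ) ≥ 0 := by
          rw [ge_iff_le, sub_nonneg, div_le_one hp0]; linarith
        have : (0:ℝ) ≤ (D b : ℝ) / p := by positivity
        nlinarith
      · rw [← add_div, div_le_one hp0]; linarith
    · rw [Finset.sum_const, Finset.card_univ, Fintype.card_fin, nsmul_eq_mul]
      field_simp
  · rintro v ⟨z, y, T, x, ⟨hz, hy, hT, hx, hyz, hxy, hsum, _, _, _⟩, rfl⟩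
    obtain ⟨b0, hb0⟩ := hpos
    have hD1 : (1:ℝ) ≤ (D b0 : ℝ) := by exact_mod_cast hb0
    have h1 : ∑ q : Fin p, x q b0 ≤ ∑ q : Fin p, (D b0 : ℝ) * z q := by
      apply Finset.sum_le_sum
      intro q _
      calc x q b0 ≤ (D b0 : ℝ) * y q b0 := hxy q b0
        _ ≤ (D b0 : ℝ) * z q := by
            apply mul_le_mul_of_nonneg_left (hyz q b0) (by positivity)
    rw [hsum b0, ← Finset.mul_sum] at h1
    have hle : (D b0 : ℝ) ≤ (D b0 : ℝ) * ∑ q : Fin p, z q := h1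
    nlinarith [hle, hD1]
end

section
/- Every LP-feasible solution (z, y) of the relaxed Formulation 2 has objective value ∑_{q} ∑_{h ∈ H} z q h ≥ 1. (Lower-bound half of Proposition 1.) -/
/-- Lower-bound half of Proposition 1: every LP-feasible solution of the relaxed
Formulation 2 has objective value at least 1. -/
theorem form2_LP_relaxation_lower_bound
    (n p M : ℕ) (hn : 1 ≤ n) (hp : 2 ≤ p) (hM : 1 ≤ M)
    (D : Fin n → ℕ) (hD : ∀ b, D b ≤ M) (hmax : ∃ bstar : Fin n, D bstar = M)
    (adj : Fin n → Fin n → Prop) (hadjSymm : Symmetric adj) (hadjIrrefl : Irreflexive adj)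
    (z : Fin p → ℕ → ℝ) (y : Fin p → ℕ → Fin n → ℝ)
    (hfeas : Form2LPFeasible n p M D adj z y) :
    1 ≤ ∑ q : Fin p, ∑ h ∈ Finset.Icc 1 M, z q h := by
  obtain ⟨hz, hy, hlog, hone, hdem, hadj⟩ := hfeas
  obtain ⟨b, hb⟩ := hmax
  have key : (M : ℝ) ≤ M * ∑ q : Fin p, ∑ h ∈ Finset.Icc 1 M, z q h := by
    calc (M : ℝ) = ∑ q : Fin p, ∑ h ∈ Finset.Icc 1 M, (h : ℝ) * y q h b := by
          rw [hdem b, hb]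
      _ ≤ ∑ q : Fin p, ∑ h ∈ Finset.Icc 1 M, (M : ℝ) * z q h := by
          apply Finset.sum_le_sum; intro q _
          apply Finset.sum_le_sum; intro h hh
          have hhM : (h : ℝ) ≤ (M : ℝ) := by
            exact_mod_cast (Finset.mem_Icc.mp hh).2
          have := (hy q h hh b).1
          have := hlog q h hh b
          have hz0 := (hz q h hh).1
          nlinarith
      _ = M * ∑ q : Fin p, ∑ h ∈ Finset.Icc 1 M, z q h := by
          rw [Finset.mul_sum]; congr 1; ext q; rw [Finset.mul_sum]
  have hMpos : (0 : ℝ) < M := by exact_mod_cast hM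
  nlinarith
end

section
/- There exists an LP-feasible solution (z, y) of the relaxed Formulation 2 whose objective value ∑_{q} ∑_{h ∈ H} z q h equals exactly 1. (Feasible-construction half of Proposition 1: for two patterns one may take y q M b = D b / (2M) and z q M = 1/2 at weight h = M, and all other entries 0.) -/
/-- Feasible-construction half of Proposition 1: there is an LP-feasible solution of the
relaxed Formulation 2 with objective value exactly 1. -/
theorem form2_LP_relaxation_achieves_one
    (n p M : ℕ) (hn : 1 ≤ n) (hp : 2 ≤ p) (hM : 1 ≤ M)
    (D : Fin n → ℕ) (hD : ∀ b, D b ≤ M) (hmax : ∃ bstar : Fin n, D bstar = M)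
    (adj : Fin n → Fin n → Prop) (hadjSymm : Symmetric adj) (hadjIrrefl : Irreflexive adj) :
    ∃ (z : Fin p → ℕ → ℝ) (y : Fin p → ℕ → Fin n → ℝ),
      Form2LPFeasible n p M D adj z y ∧
      ∑ q : Fin p, ∑ h ∈ Finset.Icc 1 M, z q h = 1 := by
  have hp0 : (0:ℝ) < (p:ℝ) := by positivity
  have hM0 : (0:ℝ) < (M:ℝ) := by exact_mod_cast hM
  have hp2 : (2:ℝ) ≤ (p:ℝ) := by exact_mod_cast hp
  refine ⟨fun q h => if h = M then 1/(p:ℝ) else 0,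
         fun q h b => if h = M then (D b : ℝ)/((p:ℝ)*(M:ℝ)) else 0, ?_, ?_⟩
  · have hMmem : M ∈ Finset.Icc 1 M := by simp [hM]
    have hyval : ∀ b : Fin n, (0:ℝ) ≤ (D b : ℝ)/((p:ℝ)*(M:ℝ)) ∧
        (D b : ℝ)/((p:ℝ)*(M:ℝ)) ≤ 1/(p:ℝ) := by
      intro b
      constructor
      · positivity
      · rw [div_le_div_iff₀ (by positivity) hp0]
        have : (D b : ℝ) ≤ (M:ℝ) := by exact_mod_cast hD b
        nlinarith
    have h1p : (1:ℝ)/(p:ℝ) ≤ 1 := by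
      rw [div_le_one hp0]; linarith
    refine ⟨?_, ?_, ?_, ?_, ?_, ?_⟩
    · intro q h hh
      by_cases hhM : h = M
      · simp only [hhM, if_true]
        exact ⟨le_of_lt (by positivity), h1p⟩
      · simp [hhM]
    · intro q h hh b
      by_cases hhM : h = M
      · simp only [hhM, if_true]
        exact ⟨(hyval b).1, le_trans (hyval b).2 h1p⟩
      · simp [hhM]
    · intro q h hh b
      by_cases hhM : h = M
      · simp only [hhM, if_true]; exact (hyval b).2
      · simp [hhM]
    · intro q
      rw [Finset.sum_ite_eq' (Finset.Icc 1 M) M]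
      simp only [hMmem, if_true]
      exact h1p
    · intro b
      have : ∀ q : Fin p, ∑ h ∈ Finset.Icc 1 M,
          (h : ℝ) * (if h = M then (D b : ℝ)/((p:ℝ)*(M:ℝ)) else 0)
          = (M:ℝ) * ((D b : ℝ)/((p:ℝ)*(M:ℝ))) := by
        intro q
        rw [Finset.sum_eq_single M]
        · simp
        · intro h _ hne; simp [hne]
        · intro hc; exact absurd hMmem hc
      rw [Finset.sum_congr rfl (fun q _ => this q)]
      simp only [Finset.sum_const, Finset.card_univ, Fintype.card_fin, nsmul_eq_mul]
      field_simp
    · intro q h hh b b' _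
      by_cases hhM : h = M
      · simp only [hhM, if_true]
        have h1 := (hyval b).2
        have h2 := (hyval b').2
        have : (1:ℝ)/(p:ℝ) + 1/(p:ℝ) ≤ 1 := by
          rw [← add_div, div_le_one hp0]; linarith
        linarith
      · simp [hhM]
  · have : ∀ q : Fin p, ∑ h ∈ Finset.Icc 1 M,
        (if h = M then 1/(p:ℝ) else 0) = 1/(p:ℝ) := by
      intro q
      rw [Finset.sum_ite_eq' (Finset.Icc 1 M) M]
      simp [hM]
    rw [Finset.sum_congr rfl (fun q _ => this q)]
    simp only [Finset.sum_const, Finset.card_univ, Fintype.card_fin, nsmul_eq_mul]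
    field_simp
end

section
/- There exists an LP-feasible solution (z, y, T, x) of the relaxed Formulation 3 whose objective value ∑_q z q equals exactly 1. (Feasible-construction half of Proposition 2: on two patterns take z q = 1/2, y q b = 1/2 for beams with D b > 0 and 0 otherwise, x q b = (D b) · y q b, and T q = 0.) -/
/-- Feasible-construction half of Proposition 2: there is an LP-feasible solution of the
relaxed Formulation 3 with objective value exactly 1. -/
theorem form3_LP_relaxation_achieves_one
    (n p M : ℕ) (hn : 1 ≤ n) (hp : 2 ≤ p) (hM : 1 ≤ M)
    (D : Fin n → ℕ) (hD : ∀ b, D b ≤ M)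
    (adj : Fin n → Fin n → Prop) (hadjSymm : Symmetric adj) (hadjIrrefl : Irreflexive adj) :
    ∃ (z : Fin p → ℝ) (y : Fin p → Fin n → ℝ) (T : Fin p → ℝ) (x : Fin p → Fin n → ℝ),
      Form3LPFeasible n p M D adj z y T x ∧ ∑ q : Fin p, z q = 1 := by
  have hp0 : (0:ℝ) < p := by positivity
  have hpinv : (0:ℝ) < (p:ℝ)⁻¹ := by positivity
  have hp2 : (2:ℝ) ≤ (p:ℝ) := by exact_mod_cast hp
  have hpinvle : (p:ℝ)⁻¹ ≤ 1 := by
    rw [inv_le_one_iff₀]; right; linarith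
  refine ⟨fun _ => (p:ℝ)⁻¹, fun _ _ => (p:ℝ)⁻¹, fun _ => 0,
    fun q b => (D b : ℝ) * (p:ℝ)⁻¹, ⟨?_, ?_, ?_, ?_, ?_, ?_, ?_, ?_, ?_, ?_⟩, ?_⟩
  · exact fun q => ⟨le_of_lt hpinv, hpinvle⟩
  · exact fun q b => ⟨le_of_lt hpinv, hpinvle⟩
  · exact fun q => le_refl 0
  · intro q b; positivity
  · exact fun q b => le_refl _
  · exact fun q b => le_refl _
  · intro b
    rw [Finset.sum_const, Finset.card_univ, Fintype.card_fin, nsmul_eq_mul]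
    field_simp
  · intro q b
    have hDM : (D b : ℝ) ≤ (M : ℝ) := by exact_mod_cast hD b
    have hM1 : (1:ℝ) ≤ (M : ℝ) := by exact_mod_cast hM
    have h1 : (D b : ℝ) * (p:ℝ)⁻¹ ≤ (M:ℝ) * (p:ℝ)⁻¹ :=
      mul_le_mul_of_nonneg_right hDM (le_of_lt hpinv)
    have h2 : (M:ℝ) * (p:ℝ)⁻¹ ≤ (M:ℝ) * (1 - (p:ℝ)⁻¹) := by
      apply mul_le_mul_of_nonneg_left _ (by linarith)
      have : (p:ℝ)⁻¹ ≤ 1/2 := by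
        rw [inv_le_iff_one_le_mul₀ hp0]; linarith
      linarith
    linarith
  · intro q b
    have hM1 : (1:ℝ) ≤ (M : ℝ) := by exact_mod_cast hM
    have : 0 ≤ (M:ℝ) * (1 - (p:ℝ)⁻¹) := by
      apply mul_nonneg (by linarith); linarith
    have : 0 ≤ (D b : ℝ) * (p:ℝ)⁻¹ := by positivity
    linarith
  · intro q b b' _
    have : (p:ℝ)⁻¹ ≤ 1/2 := by
      rw [inv_le_iff_one_le_mul₀ hp0]; linarith
    linarith
  · rw [Finset.sum_const, Finset.card_univ, Fintype.card_fin, nsmul_eq_mul]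
    field_simp
end

section
/- Suppose p ≥ Nat.log 2 M + 1. Then there exists a solution (z, y, T, x) satisfying constraints (i)–(v) of Formulation 3 (the interference constraint (vi) and the cardinality constraint are not imposed) in which every z q and every y q b lies in {0,1}, whose objective value satisfies ∑_q z q ≤ Nat.log 2 M + 1. (DP2 provides a feasible upper bound for Formulation 3: pattern k illuminates exactly the beams b with Nat.testBit (D b) k = true, with dwell time T k = 2^k.) -/
/-- Constraints (i)–(v) of Formulation 3 (without the interference and cardinality
constraints). -/
def Form3FeasibleNoInterference (n p M : ℕ) (D : Fin n → ℕ)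
    (z : Fin p → ℝ) (y : Fin p → Fin n → ℝ) (T : Fin p → ℝ) (x : Fin p → Fin n → ℝ) : Prop :=
  (∀ q : Fin p, 0 ≤ z q ∧ z q ≤ 1) ∧
  (∀ q : Fin p, ∀ b : Fin n, 0 ≤ y q b ∧ y q b ≤ 1) ∧
  (∀ q : Fin p, 0 ≤ T q) ∧
  (∀ q : Fin p, ∀ b : Fin n, 0 ≤ x q b) ∧
  -- (i) logic constraint
  (∀ q : Fin p, ∀ b : Fin n, y q b ≤ z q) ∧
  -- (ii) logic constraint on durations
  (∀ q : Fin p, ∀ b : Fin n, x q b ≤ (D b : ℝ) * y q b) ∧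
  -- (iii) demand constraint
  (∀ b : Fin n, ∑ q : Fin p, x q b = (D b : ℝ)) ∧
  -- (iv) and (v): equal dwell time within a pattern
  (∀ q : Fin p, ∀ b : Fin n, x q b ≤ T q + (M : ℝ) * (1 - y q b)) ∧
  (∀ q : Fin p, ∀ b : Fin n, T q - (M : ℝ) * (1 - y q b) ≤ x q b)

private lemma sum_testBit (p : ℕ) : ∀ d : ℕ, d < 2 ^ p →
    ∑ i ∈ Finset.range p, (if d.testBit i then 2 ^ i else 0) = d := by
  induction p with
  | zero => intro d hd; interval_cases d; simp
  | succ p ih =>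
    intro d hd
    rw [Finset.sum_range_succ']
    have h1 : ∀ i, d.testBit (i + 1) = (d / 2).testBit i := by
      intro i; rw [Nat.testBit_succ]
    have h2 : ∑ i ∈ Finset.range p, (if d.testBit (i + 1) then 2 ^ (i + 1) else 0)
        = 2 * ∑ i ∈ Finset.range p, (if (d / 2).testBit i then 2 ^ i else 0) := by
      rw [Finset.mul_sum]
      refine Finset.sum_congr rfl fun i _ => ?_
      rw [h1]; split <;> ring
    have hd2 : d / 2 < 2 ^ p := by
      refine Nat.div_lt_of_lt_mul ?_
      rw [mul_comm]; exact hd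
    rw [h2, ih _ hd2]
    have : (if d.testBit 0 then 2 ^ 0 else 0) = d % 2 := by
      rcases Nat.mod_two_eq_zero_or_one d with h | h <;>
        simp [Nat.mod_two_eq_zero_iff_testBit_zero, h]
    omega


/-- DP2 provides a feasible upper bound for Formulation 3: with at least
`⌊log₂ M⌋ + 1` patterns available, there is a binary solution satisfying constraints
(i)–(v) whose objective value is at most `⌊log₂ M⌋ + 1`. -/
theorem dp2_upper_bound_form3
    (n p M : ℕ) (hn : 1 ≤ n) (hM : 1 ≤ M)
    (D : Fin n → ℕ) (hD : ∀ b, D b ≤ M)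
    (hp : Nat.log 2 M + 1 ≤ p) :
    ∃ (z : Fin p → ℝ) (y : Fin p → Fin n → ℝ) (T : Fin p → ℝ) (x : Fin p → Fin n → ℝ),
      Form3FeasibleNoInterference n p M D z y T x ∧
      (∀ q : Fin p, z q = 0 ∨ z q = 1) ∧
      (∀ q : Fin p, ∀ b : Fin n, y q b = 0 ∨ y q b = 1) ∧
      ∑ q : Fin p, z q ≤ (Nat.log 2 M + 1 : ℝ) := by
  set L := Nat.log 2 M + 1 with hL
  have hML : M < 2 ^ L := Nat.lt_pow_succ_log_self (by norm_num) M
  have hbitlt : ∀ b q, (D b).testBit q → q < L := by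
    intro b q h
    have h1 : 2 ^ q ≤ D b := Nat.ge_two_pow_of_testBit h
    have := (hD b).trans_lt hML
    by_contra hq
    exact absurd ((Nat.pow_le_pow_right (by norm_num) (le_of_not_gt hq)).trans h1)
      (by omega)
  have hpowM : ∀ q, q < L → 2 ^ q ≤ M := by
    intro q hq
    calc 2 ^ q ≤ 2 ^ Nat.log 2 M := Nat.pow_le_pow_right (by norm_num) (by omega)
    _ ≤ M := Nat.pow_log_le_self 2 (by omega)
  -- definitions
  set z : Fin p → ℝ := fun q => if (q : ℕ) < L then 1 else 0 with hz
  set y : Fin p → Fin n → ℝ := fun q b => if (D b).testBit q then 1 else 0 with hy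
  set T : Fin p → ℝ := fun q => if (q : ℕ) < L then (2 ^ (q : ℕ) : ℝ) else 0 with hT
  set x : Fin p → Fin n → ℝ := fun q b => if (D b).testBit q then (2 ^ (q : ℕ) : ℝ) else 0 with hx
  have feas : Form3FeasibleNoInterference n p M D z y T x := by
    refine ⟨fun q => ?_, fun q b => ?_, fun q => ?_, fun q b => ?_, fun q b => ?_,
      fun q b => ?_, fun b => ?_, fun q b => ?_, fun q b => ?_⟩
    · simp only [hz]; split <;> norm_num
    · simp only [hy]; split <;> norm_num
    · simp only [hT]; split <;> positivity
    · simp only [hx]; split <;> positivity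
    · simp only [hz, hy]
      split
      · simp [hbitlt b q ‹_›]
      · split <;> norm_num
    · simp only [hx, hy]
      split
      · have h1 : (2:ℕ) ^ (q:ℕ) ≤ D b := Nat.ge_two_pow_of_testBit ‹_›
        have : ((2:ℝ)) ^ (q:ℕ) ≤ (D b : ℝ) := by exact_mod_cast h1
        simpa using this
      · simp
    · -- demand
      have hDlt : D b < 2 ^ p :=
        ((hD b).trans_lt hML).trans_le (Nat.pow_le_pow_right (by norm_num) hp)
      calc ∑ q : Fin p, x q b
          = ∑ i ∈ Finset.range p, (((if (D b).testBit i then 2 ^ i else 0 : ℕ)) : ℝ) := by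
            rw [← Fin.sum_univ_eq_sum_range (fun i => (((if (D b).testBit i then 2 ^ i else 0 : ℕ)) : ℝ)) p]
            refine Finset.sum_congr rfl fun q _ => ?_
            simp only [hx]; split <;> push_cast <;> simp
        _ = (((∑ i ∈ Finset.range p, (if (D b).testBit i then 2 ^ i else 0) : ℕ)) : ℝ) := by
            push_cast; ring
        _ = (D b : ℝ) := by rw [sum_testBit p (D b) hDlt]
    · simp only [hx, hT]
      split
      · have := hbitlt b q ‹_›
        simp only [this, if_pos, hy, if_pos ‹(D b).testBit (q:ℕ)›]
        nlinarith [hpowM q this]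
      · simp only [hy, if_neg ‹_›]
        split <;> positivity
    · simp only [hx, hT, hy]
      by_cases hb : (D b).testBit (q:ℕ)
      · have hql := hbitlt b q hb
        simp [hb, hql]
      · have h1 : (0:ℝ) ≤ M := by positivity
        simp only [if_neg hb]
        by_cases hql : (q:ℕ) < L
        · have h2 : ((2:ℝ)) ^ (q:ℕ) ≤ (M:ℝ) := by exact_mod_cast hpowM q hql
          simp only [if_pos hql]; linarith
        · simp only [if_neg hql]; linarith
  refine ⟨z, y, T, x, feas, fun q => ?_, fun q b => ?_, ?_⟩
  · simp only [hz]; split <;> simp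
  · simp only [hy]; split <;> simp
  · have hsum : ∑ q : Fin p, z q = ((((Finset.range p).filter (· < L)).card : ℕ) : ℝ) := by
      rw [hz, Fin.sum_univ_eq_sum_range (fun i => if i < L then (1:ℝ) else 0) p,
        Finset.sum_boole]
    have hfil : (Finset.range p).filter (· < L) = Finset.range L := by
      ext i; simp only [Finset.mem_filter, Finset.mem_range]; omega
    rw [hsum, hfil, Finset.card_range]
    push_cast [hL]
    exact le_refl _
end

section
/- Suppose p ≥ Nat.log 2 M + 1. Then there exists a solution (z, y) satisfying constraints (i)–(iii) of Formulation 2 (the interference constraint (iv) and the cardinality constraint are not imposed) in which every z q h and every y q h b lies in {0,1}, whose objective value satisfies ∑_{q} ∑_{h ∈ H} z q h ≤ Nat.log 2 M + 1. (DP2 provides a feasible upper bound for Formulation 2: pattern k carries the single weight h = 2^k and illuminates exactly the beams b with Nat.testBit (D b) k = true.) -/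
lemma testbit_sum_mod (m L : ℕ) :
    ∑ k ∈ Finset.range L, 2 ^ k * (m.testBit k).toNat = m % 2 ^ L := by
  induction L with
  | zero => simp [Nat.mod_one]
  | succ L ih =>
    rw [Finset.sum_range_succ, ih, Nat.testBit_eq_decide_div_mod_eq, Nat.pow_succ, Nat.mod_mul]
    rcases Nat.mod_two_eq_zero_or_one (m / 2 ^ L) with h | h <;> simp [h]

def Form2FeasibleNoInterference (n p M : ℕ) (D : Fin n → ℕ)
    (z : Fin p → ℕ → ℝ) (y : Fin p → ℕ → Fin n → ℝ) : Prop :=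
  (∀ q : Fin p, ∀ h ∈ Finset.Icc 1 M, 0 ≤ z q h ∧ z q h ≤ 1) ∧
  (∀ q : Fin p, ∀ h ∈ Finset.Icc 1 M, ∀ b : Fin n, 0 ≤ y q h b ∧ y q h b ≤ 1) ∧
  (∀ q : Fin p, ∀ h ∈ Finset.Icc 1 M, ∀ b : Fin n, y q h b ≤ z q h) ∧
  (∀ q : Fin p, ∑ h ∈ Finset.Icc 1 M, z q h ≤ 1) ∧
  (∀ b : Fin n, ∑ q : Fin p, ∑ h ∈ Finset.Icc 1 M, (h : ℝ) * y q h b = (D b : ℝ))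

/-- DP2 provides a feasible upper bound for Formulation 2: with at least
`⌊log₂ M⌋ + 1` patterns available, there is a binary solution satisfying constraints
(i)–(iii) whose objective value is at most `⌊log₂ M⌋ + 1`. -/
theorem dp2_upper_bound_form2
    (n p M : ℕ) (hn : 1 ≤ n) (hM : 1 ≤ M)
    (D : Fin n → ℕ) (hD : ∀ b, D b ≤ M)
    (hp : Nat.log 2 M + 1 ≤ p) :
    ∃ (z : Fin p → ℕ → ℝ) (y : Fin p → ℕ → Fin n → ℝ),
      Form2FeasibleNoInterference n p M D z y ∧
      (∀ q : Fin p, ∀ h ∈ Finset.Icc 1 M, z q h = 0 ∨ z q h = 1) ∧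
      (∀ q : Fin p, ∀ h ∈ Finset.Icc 1 M, ∀ b : Fin n, y q h b = 0 ∨ y q h b = 1) ∧
      ∑ q : Fin p, ∑ h ∈ Finset.Icc 1 M, z q h ≤ (Nat.log 2 M + 1 : ℝ) := by
  set L := Nat.log 2 M with hL
  have hmem : ∀ k : ℕ, k ≤ L → 2 ^ k ∈ Finset.Icc 1 M := by
    intro k hk
    refine Finset.mem_Icc.mpr ⟨Nat.one_le_two_pow, ?_⟩
    exact le_trans (Nat.pow_le_pow_right (by norm_num) hk)
      (Nat.pow_log_le_self 2 (by omega))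
  refine ⟨fun q h => if q.val ≤ L ∧ h = 2 ^ q.val then 1 else 0,
    fun q h b => if q.val ≤ L ∧ (D b).testBit q.val ∧ h = 2 ^ q.val then 1 else 0,
    ⟨?_, ?_, ?_, ?_, ?_⟩, ?_, ?_, ?_⟩
  · intro q h _; dsimp only; split_ifs <;> norm_num
  · intro q h _ b; dsimp only; split_ifs <;> norm_num
  · intro q h _ b; dsimp only; split_ifs <;> simp_all
  · intro q
    by_cases hq : q.val ≤ L
    · simp only [hq, true_and]
      rw [Finset.sum_ite_eq' (Finset.Icc 1 M) (2 ^ q.val) (fun _ => (1:ℝ))]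
      simp [hmem q.val hq]
    · simp [hq]
  · intro b
    have hinner : ∀ q : Fin p, ∑ h ∈ Finset.Icc 1 M,
        (h : ℝ) * (if q.val ≤ L ∧ (D b).testBit q.val ∧ h = 2 ^ q.val then 1 else 0)
        = if q.val ≤ L ∧ (D b).testBit q.val then ((2:ℝ) ^ q.val) else 0 := by
      intro q
      by_cases hq : q.val ≤ L ∧ (D b).testBit q.val
      · simp only [hq.1, hq.2, true_and]
        rw [Finset.sum_congr rfl (fun h _ => by
          rw [show ((h:ℝ) * if h = 2 ^ q.val then 1 else 0)
            = if h = 2 ^ q.val then ((h:ℝ)) else 0 by split_ifs <;> simp]),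
          Finset.sum_ite_eq' (Finset.Icc 1 M) (2 ^ q.val) (fun h => (h:ℝ))]
        simp [hmem q.val hq.1]
      · rw [if_neg hq]
        refine Finset.sum_eq_zero fun h _ => ?_
        have hc : ¬(q.val ≤ L ∧ (D b).testBit q.val ∧ h = 2 ^ q.val) := by tauto
        simp [hc]
    rw [Finset.sum_congr rfl (fun q _ => hinner q)]
    have hnat : ∑ k ∈ Finset.range p,
        (if k ≤ L ∧ (D b).testBit k then 2 ^ k else 0) = D b := by
      rw [← Finset.sum_subset (Finset.range_subset_range.mpr hp)
        (by intro x _ hx; simp at hx; simp; intro h; omega)]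
      have : ∀ k ∈ Finset.range (L + 1),
          (if k ≤ L ∧ (D b).testBit k then 2 ^ k else 0)
          = 2 ^ k * ((D b).testBit k).toNat := by
        intro k hk
        simp at hk
        rcases Bool.eq_false_or_eq_true ((D b).testBit k) with h | h <;>
          simp [h, hk]
      rw [Finset.sum_congr rfl this, testbit_sum_mod]
      exact Nat.mod_eq_of_lt (lt_of_le_of_lt (hD b) (Nat.lt_pow_succ_log_self (by norm_num) M))
    calc ∑ q : Fin p, (if q.val ≤ L ∧ (D b).testBit q.val then ((2:ℝ) ^ q.val) else 0)
        = ((∑ k ∈ Finset.range p,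
            (if k ≤ L ∧ (D b).testBit k then 2 ^ k else 0) : ℕ) : ℝ) := by
          rw [Finset.sum_range fun k => (if k ≤ L ∧ (D b).testBit k then 2 ^ k else 0)]
          push_cast
          exact Finset.sum_congr rfl (fun q _ => by split_ifs <;> norm_num)
      _ = (D b : ℝ) := by rw [hnat]
  · intro q h _; dsimp only; split_ifs <;> simp
  · intro q h _ b; dsimp only; split_ifs <;> simp
  · have hinner : ∀ q : Fin p, ∑ h ∈ Finset.Icc 1 M,
        (if q.val ≤ L ∧ h = 2 ^ q.val then (1:ℝ) else 0)
        ≤ if q.val ≤ L then 1 else 0 := by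
      intro q
      by_cases hq : q.val ≤ L
      · simp only [hq, true_and, if_true]
        rw [Finset.sum_ite_eq' (Finset.Icc 1 M) (2 ^ q.val) (fun _ => (1:ℝ))]
        split_ifs <;> norm_num
      · simp [hq]
    calc ∑ q : Fin p, ∑ h ∈ Finset.Icc 1 M, (if q.val ≤ L ∧ h = 2 ^ q.val then (1:ℝ) else 0)
        ≤ ∑ q : Fin p, if q.val ≤ L then (1:ℝ) else 0 := Finset.sum_le_sum fun q _ => hinner q
      _ = ∑ k ∈ Finset.range p, if k ≤ L then (1:ℝ) else 0 := by
          rw [Finset.sum_range fun k => if k ≤ L then (1:ℝ) else 0]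
      _ ≤ (L + 1 : ℝ) := by
          rw [← Finset.sum_filter]
          have : Finset.filter (fun k => k ≤ L) (Finset.range p) ⊆ Finset.range (L + 1) := by
            intro x hx; simp at hx ⊢; omega
          calc (∑ _k ∈ Finset.filter (fun k => k ≤ L) (Finset.range p), (1:ℝ))
              = (Finset.filter (fun k => k ≤ L) (Finset.range p)).card := by simp
            _ ≤ ((L + 1 : ℕ) : ℝ) := by
                have := Finset.card_le_card this
                simp only [Finset.card_range] at this
                exact_mod_cast this
            _ = (L + 1 : ℝ) := by push_cast; ring
end

section
/- Let (z, y, T, x) be an integer-feasible solution of Formulation 3 and suppose there are two distinct patterns q1 ≠ q2 with z q1 = 1, z q2 = 1 and y q1 b = y q2 b for every beam b (the two patterns illuminate the same set of beams). Then there exists an integer-feasible solution (z', y', T', x') of Formulation 3 with objective value ∑_q z' q = (∑_q z q) − 1. (Merging two identical patterns into one pattern with dwell time T q1 + T q2 preserves feasibility and reduces the number of patterns.) -/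
/-- Merging two identical patterns: if an integer-feasible solution of Formulation 3 uses
two distinct patterns illuminating the same set of beams, there is an integer-feasible
solution whose objective value is one less. -/
theorem form3_merge_identical_patterns
    (n p M : ℕ) (hn : 1 ≤ n) (hp : 2 ≤ p) (hM : 1 ≤ M)
    (D : Fin n → ℕ) (hD : ∀ b, D b ≤ M)
    (adj : Fin n → Fin n → Prop) (hadjSymm : Symmetric adj) (hadjIrrefl : Irreflexive adj)
    (z : Fin p → ℝ) (y : Fin p → Fin n → ℝ) (T : Fin p → ℝ) (x : Fin p → Fin n → ℝ)
    (hfeas : Form3IntFeasible n p M D adj z y T x)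
    (q1 q2 : Fin p) (hne : q1 ≠ q2) (hz1 : z q1 = 1) (hz2 : z q2 = 1)
    (hsame : ∀ b : Fin n, y q1 b = y q2 b) :
    ∃ (z' : Fin p → ℝ) (y' : Fin p → Fin n → ℝ) (T' : Fin p → ℝ) (x' : Fin p → Fin n → ℝ),
      Form3IntFeasible n p M D adj z' y' T' x' ∧
      ∑ q : Fin p, z' q = (∑ q : Fin p, z q) - 1 := by
  obtain ⟨⟨hz01, hy01, hT0, hx0, hyz, hxD, hdem, hxT1, hxT2, hadjc⟩, hzbin, hybin⟩ := hfeas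
  have hDM : ∀ b : Fin n, (D b : ℝ) ≤ (M : ℝ) := fun b => Nat.cast_le.mpr (hD b)
  have hpair : ∀ b, x q1 b + x q2 b ≤ (D b : ℝ) := by
    intro b
    calc x q1 b + x q2 b = ∑ q ∈ ({q1, q2} : Finset (Fin p)), x q b :=
          (Finset.sum_pair (f := fun q => x q b) hne).symm
      _ ≤ ∑ q : Fin p, x q b :=
          Finset.sum_le_sum_of_subset_of_nonneg (Finset.subset_univ _)
            (fun i _ _ => hx0 i b)
      _ = (D b : ℝ) := hdem b
  have hx_of_y0 : ∀ q b, y q b = 0 → x q b = 0 := by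
    intro q b h
    have h1 := hxD q b
    rw [h, mul_zero] at h1
    exact le_antisymm h1 (hx0 q b)
  have hx_of_y1 : ∀ q b, y q b = 1 → x q b = T q := by
    intro q b h
    have h1 := hxT1 q b
    have h2 := hxT2 q b
    rw [h] at h1 h2
    simp only [sub_self, mul_zero, add_zero, sub_zero] at h1 h2
    linarith
  refine ⟨fun q => if q = q2 then 0 else z q,
    fun q b => if q = q2 then 0 else y q b,
    fun q => if q = q2 then 0 else if q = q1 then min (T q1 + T q2) (M : ℝ) else T q,
    fun q b => if q = q2 then 0 else if q = q1 then x q1 b + x q2 b else x q b,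
    ⟨⟨?_, ?_, ?_, ?_, ?_, ?_, ?_, ?_, ?_, ?_⟩, ?_, ?_⟩, ?_⟩
  · intro q
    dsimp only
    by_cases h2 : q = q2
    · rw [if_pos h2]; norm_num
    · rw [if_neg h2]; exact hz01 q
  · intro q b
    dsimp only
    by_cases h2 : q = q2
    · rw [if_pos h2]; norm_num
    · rw [if_neg h2]; exact hy01 q b
  · intro q
    dsimp only
    by_cases h2 : q = q2
    · rw [if_pos h2]
    by_cases h1 : q = q1
    · rw [if_neg h2, if_pos h1]
      exact le_min (add_nonneg (hT0 q1) (hT0 q2)) (Nat.cast_nonneg M)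
    · rw [if_neg h2, if_neg h1]; exact hT0 q
  · intro q b
    dsimp only
    by_cases h2 : q = q2
    · rw [if_pos h2]
    by_cases h1 : q = q1
    · rw [if_neg h2, if_pos h1]
      exact add_nonneg (hx0 q1 b) (hx0 q2 b)
    · rw [if_neg h2, if_neg h1]; exact hx0 q b
  · intro q b
    dsimp only
    by_cases h2 : q = q2
    · rw [if_pos h2, if_pos h2]
    · rw [if_neg h2, if_neg h2]; exact hyz q b
  · intro q b
    dsimp only
    by_cases h2 : q = q2
    · rw [if_pos h2, if_pos h2, mul_zero]
    by_cases h1 : q = q1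
    · subst h1
      rw [if_neg h2, if_pos rfl, if_neg h2]
      rcases hybin q b with hy0 | hy1
      · have hy2 : y q2 b = 0 := (hsame b).symm.trans hy0
        rw [hx_of_y0 q b hy0, hx_of_y0 q2 b hy2, hy0, mul_zero, add_zero]
      · rw [hy1, mul_one]
        exact hpair b
    · rw [if_neg h2, if_neg h1, if_neg h2]; exact hxD q b
  · intro b
    dsimp only
    have key : ∀ q : Fin p,
        (if q = q2 then (0:ℝ) else if q = q1 then x q1 b + x q2 b else x q b)
          = x q b + (if q = q1 then x q2 b else 0) - (if q = q2 then x q2 b else 0) := by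
      intro q
      by_cases h2 : q = q2
      · subst h2
        rw [if_pos rfl, if_pos rfl, if_neg (Ne.symm hne)]
        ring
      by_cases h1 : q = q1
      · rw [if_neg h2, if_pos h1, if_pos h1, if_neg h2, h1]
        ring
      · rw [if_neg h2, if_neg h1, if_neg h1, if_neg h2]
        ring
    rw [Finset.sum_congr rfl (fun q _ => key q)]
    rw [Finset.sum_sub_distrib, Finset.sum_add_distrib]
    simp only [Finset.sum_ite_eq', Finset.mem_univ, if_true]
    rw [hdem b]
    ring
  · intro q b
    dsimp only
    by_cases h2 : q = q2
    · rw [if_pos h2, if_pos h2, if_pos h2]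
      have : (0:ℝ) ≤ (M:ℝ) * (1 - 0) := by positivity
      linarith
    by_cases h1 : q = q1
    · subst h1
      rw [if_neg h2, if_pos rfl, if_neg h2, if_pos rfl, if_neg h2]
      rcases hybin q b with hy0 | hy1
      · have hy2 : y q2 b = 0 := (hsame b).symm.trans hy0
        rw [hx_of_y0 q b hy0, hx_of_y0 q2 b hy2, hy0]
        have h0 : (0:ℝ) ≤ min (T q + T q2) (M : ℝ) :=
          le_min (add_nonneg (hT0 q) (hT0 q2)) (Nat.cast_nonneg M)
        have hM0 : (0:ℝ) ≤ (M:ℝ) := Nat.cast_nonneg M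
        linarith
      · have hy2 : y q2 b = 1 := (hsame b).symm.trans hy1
        rw [hx_of_y1 q b hy1, hx_of_y1 q2 b hy2, hy1]
        have hle : T q + T q2 ≤ (M : ℝ) := by
          have hp2 := hpair b
          rw [hx_of_y1 q b hy1, hx_of_y1 q2 b hy2] at hp2
          linarith [hDM b]
        have hmin := min_eq_left hle
        linarith
    · rw [if_neg h2, if_neg h1, if_neg h2, if_neg h1, if_neg h2]
      exact hxT1 q b
  · intro q b
    dsimp only
    by_cases h2 : q = q2
    · rw [if_pos h2, if_pos h2, if_pos h2]
      have : (0:ℝ) ≤ (M:ℝ) * (1 - 0) := by positivity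
      linarith
    by_cases h1 : q = q1
    · subst h1
      rw [if_neg h2, if_pos rfl, if_neg h2, if_neg h2, if_pos rfl]
      rcases hybin q b with hy0 | hy1
      · have hy2 : y q2 b = 0 := (hsame b).symm.trans hy0
        rw [hx_of_y0 q b hy0, hx_of_y0 q2 b hy2, hy0]
        have hmr : min (T q + T q2) (M : ℝ) ≤ (M : ℝ) := min_le_right _ _
        linarith
      · have hy2 : y q2 b = 1 := (hsame b).symm.trans hy1
        rw [hx_of_y1 q b hy1, hx_of_y1 q2 b hy2, hy1]
        have hle : T q + T q2 ≤ (M : ℝ) := by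
          have hp2 := hpair b
          rw [hx_of_y1 q b hy1, hx_of_y1 q2 b hy2] at hp2
          linarith [hDM b]
        have hmin := min_eq_left hle
        linarith
    · rw [if_neg h2, if_neg h1, if_neg h2, if_neg h1, if_neg h2]
      exact hxT2 q b
  · intro q b b' hbb'
    dsimp only
    by_cases h2 : q = q2
    · rw [if_pos h2, if_pos h2]; norm_num
    · rw [if_neg h2, if_neg h2]; exact hadjc q b b' hbb'
  · intro q
    dsimp only
    by_cases h2 : q = q2
    · rw [if_pos h2]; exact Or.inl rfl
    · rw [if_neg h2]; exact hzbin q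
  · intro q b
    dsimp only
    by_cases h2 : q = q2
    · rw [if_pos h2]; exact Or.inl rfl
    · rw [if_neg h2]; exact hybin q b
  · dsimp only
    have key : ∀ q : Fin p,
        (if q = q2 then (0:ℝ) else z q) = z q - (if q = q2 then 1 else 0) := by
      intro q
      by_cases h2 : q = q2
      · subst h2; rw [if_pos rfl, if_pos rfl, hz2]; ring
      · rw [if_neg h2, if_neg h2]; ring
    rw [Finset.sum_congr rfl (fun q _ => key q), Finset.sum_sub_distrib]
    simp only [Finset.sum_ite_eq', Finset.mem_univ, if_true]
end

section
/- Let (z, y, T, x) be an integer-feasible solution of Formulation 3 that minimizes the objective ∑_q z q among all integer-feasible solutions of Formulation 3. Then all used patterns are distinct: for any two distinct patterns q1 ≠ q2 with z q1 = 1 and z q2 = 1, there exists a beam b with y q1 b ≠ y q2 b. (All patterns in an optimal solution are distinct, since two patterns illuminating the same beam set could be combined into one with dwell time T q1 + T q2.) -/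
/-- All patterns in an optimal integer solution of Formulation 3 are distinct. -/
theorem form3_optimal_patterns_distinct
    (n p M : ℕ) (hn : 1 ≤ n) (hp : 2 ≤ p) (hM : 1 ≤ M)
    (D : Fin n → ℕ) (hD : ∀ b, D b ≤ M)
    (adj : Fin n → Fin n → Prop) (hadjSymm : Symmetric adj) (hadjIrrefl : Irreflexive adj)
    (z : Fin p → ℝ) (y : Fin p → Fin n → ℝ) (T : Fin p → ℝ) (x : Fin p → Fin n → ℝ)
    (hfeas : Form3IntFeasible n p M D adj z y T x)
    (hopt : ∀ (z' : Fin p → ℝ) (y' : Fin p → Fin n → ℝ) (T' : Fin p → ℝ)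
      (x' : Fin p → Fin n → ℝ), Form3IntFeasible n p M D adj z' y' T' x' →
      ∑ q : Fin p, z q ≤ ∑ q : Fin p, z' q) :
    ∀ q1 q2 : Fin p, q1 ≠ q2 → z q1 = 1 → z q2 = 1 →
      ∃ b : Fin n, y q1 b ≠ y q2 b := by
  classical
  intro q1 q2 hne hz1 hz2
  by_contra hcon
  push_neg at hcon
  obtain ⟨⟨hz01, hy01, hT0, hx0, hyz, hxDy, hdem, hiv, hv, hadjc⟩, hzbin, hybin⟩ := hfeas
  have hne' : q2 ≠ q1 := hne.symm
  have hM1 : (1 : ℝ) ≤ (M : ℝ) := by exact_mod_cast hM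
  have hM0 : (0 : ℝ) ≤ (M : ℝ) := by linarith
  -- auxiliary facts
  have hA : ∀ b, x q1 b + x q2 b ≤ (D b : ℝ) := by
    intro b
    have h1 : ∑ q ∈ ({q1, q2} : Finset (Fin p)), x q b = x q1 b + x q2 b :=
      Finset.sum_pair hne
    have h2 : ∑ q ∈ ({q1, q2} : Finset (Fin p)), x q b ≤ ∑ q : Fin p, x q b :=
      Finset.sum_le_sum_of_subset_of_nonneg (Finset.subset_univ _)
        (fun i _ _ => hx0 i b)
    rw [h1, hdem b] at h2
    exact h2
  have hC : ∀ b, y q1 b = 0 → x q1 b = 0 ∧ x q2 b = 0 := by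
    intro b hy
    constructor
    · have h := hxDy q1 b; rw [hy] at h
      have := hx0 q1 b; linarith
    · have h := hxDy q2 b
      rw [← hcon b, hy] at h
      have := hx0 q2 b; linarith
  have hB : ∀ b, y q1 b = 1 → x q1 b = T q1 ∧ x q2 b = T q2 := by
    intro b hy
    have hy2 : y q2 b = 1 := by rw [← hcon b]; exact hy
    constructor
    · have h1 := hiv q1 b; have h2 := hv q1 b
      rw [hy] at h1 h2; linarith
    · have h1 := hiv q2 b; have h2 := hv q2 b
      rw [hy2] at h1 h2; linarith
  have hTM : (∃ b, y q1 b = 1) → T q1 + T q2 ≤ (M : ℝ) := by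
    rintro ⟨b0, hb0⟩
    obtain ⟨e1, e2⟩ := hB b0 hb0
    have := hA b0
    have hDM : (D b0 : ℝ) ≤ (M : ℝ) := Nat.cast_le.mpr (hD b0)
    linarith
  -- the modified solution
  set Tm : ℝ := if ∃ b, y q1 b = 1 then T q1 + T q2 else 0 with hTmdef
  have hTm0 : 0 ≤ Tm := by
    rw [hTmdef]; split
    · have := hT0 q1; have := hT0 q2; linarith
    · exact le_rfl
  have hTmM : Tm ≤ (M : ℝ) := by
    rw [hTmdef]; split
    · exact hTM ‹_›
    · linarith
  set z' : Fin p → ℝ := fun q => if q = q2 then 0 else z q with hz'def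
  set y' : Fin p → Fin n → ℝ := fun q b => if q = q2 then 0 else y q b with hy'def
  set T' : Fin p → ℝ := fun q =>
    if q = q1 then Tm else if q = q2 then 0 else T q with hT'def
  set x' : Fin p → Fin n → ℝ := fun q b =>
    if q = q1 then x q1 b + x q2 b else if q = q2 then 0 else x q b with hx'def
  have hfeas' : Form3IntFeasible n p M D adj z' y' T' x' := by
    refine ⟨⟨?_, ?_, ?_, ?_, ?_, ?_, ?_, ?_, ?_, ?_⟩, ?_, ?_⟩
    · intro q
      by_cases hq : q = q2 <;> simp [hz'def, hq]
      exact hz01 q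
    · intro q b
      by_cases hq : q = q2 <;> simp [hy'def, hq]
      exact hy01 q b
    · intro q
      by_cases hq1 : q = q1
      · simp only [hT'def, if_pos hq1]; exact hTm0
      · by_cases hq2 : q = q2 <;> simp [hT'def, hq1, hq2, hne']
        exact hT0 q
    · intro q b
      by_cases hq1 : q = q1
      · simp only [hx'def, if_pos hq1]
        have := hx0 q1 b; have := hx0 q2 b; linarith
      · by_cases hq2 : q = q2 <;> simp [hx'def, hq1, hq2, hne']
        exact hx0 q b
    · intro q b
      by_cases hq2 : q = q2 <;> simp [hy'def, hz'def, hq2]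
      exact hyz q b
    · intro q b
      by_cases hq1 : q = q1
      · have hq2 : ¬ q = q2 := by rw [hq1]; exact hne
        simp only [hx'def, hy'def, hq1]
        simp [hne]
        rcases hybin q1 b with hy0 | hy1
        · obtain ⟨e1, e2⟩ := hC b hy0
          rw [e1, e2, hy0]; simp
        · rw [hy1, mul_one]; exact hA b
      · by_cases hq2 : q = q2 <;> simp [hx'def, hy'def, hq1, hq2, hne']
        exact hxDy q b
    · intro b
      have hpt : ∀ q : Fin p, x' q b = x q b +
          ((if q = q1 then x q2 b else 0) - (if q = q2 then x q2 b else 0)) := by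
        intro q
        by_cases hq1 : q = q1
        · have hq2 : ¬ q = q2 := by rw [hq1]; exact hne
          simp [hx'def, hq1, hq2, hne]
        · by_cases hq2 : q = q2 <;> simp [hx'def, hq1, hq2, hne']
      rw [Finset.sum_congr rfl fun q _ => hpt q]
      rw [Finset.sum_add_distrib, Finset.sum_sub_distrib]
      simp [Finset.sum_ite_eq', hdem b]
    · intro q b
      by_cases hq1 : q = q1
      · have hq2 : ¬ q = q2 := by rw [hq1]; exact hne
        simp only [hx'def, hy'def, hT'def, hq1]
        simp [hne]
        rcases hybin q1 b with hy0 | hy1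
        · obtain ⟨e1, e2⟩ := hC b hy0
          rw [e1, e2, hy0]
          linarith
        · obtain ⟨e1, e2⟩ := hB b hy1
          have hTmval : Tm = T q1 + T q2 := by
            rw [hTmdef, if_pos ⟨b, hy1⟩]
          rw [e1, e2, hy1, hTmval]
          nlinarith
      · by_cases hq2 : q = q2
        · simp only [hx'def, hy'def, hT'def, if_neg hq1, if_pos hq2, hq2, if_pos rfl]
          simp [hne']
        · simp only [hx'def, hy'def, hT'def, if_neg hq1, if_neg hq2]
          exact hiv q b
    · intro q b
      by_cases hq1 : q = q1
      · have hq2 : ¬ q = q2 := by rw [hq1]; exact hne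
        simp only [hx'def, hy'def, hT'def, hq1]
        simp [hne]
        rcases hybin q1 b with hy0 | hy1
        · obtain ⟨e1, e2⟩ := hC b hy0
          rw [e1, e2, hy0]
          linarith
        · obtain ⟨e1, e2⟩ := hB b hy1
          have hTmval : Tm = T q1 + T q2 := by
            rw [hTmdef, if_pos ⟨b, hy1⟩]
          rw [e1, e2, hy1, hTmval]
          nlinarith
      · by_cases hq2 : q = q2
        · simp only [hx'def, hy'def, hT'def, if_neg hq1, if_pos hq2, hq2, if_pos rfl]
          simp [hne']
        · simp only [hx'def, hy'def, hT'def, if_neg hq1, if_neg hq2]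
          exact hv q b
    · intro q b b' hbb'
      by_cases hq2 : q = q2 <;> simp [hy'def, hq2]
      exact hadjc q b b' hbb'
    · intro q
      by_cases hq : q = q2 <;> simp [hz'def, hq]
      exact hzbin q
    · intro q b
      by_cases hq : q = q2 <;> simp [hy'def, hq]
      exact hybin q b
  -- objective decreases, contradiction
  have hsum : ∑ q : Fin p, z' q = (∑ q : Fin p, z q) - 1 := by
    have hpt : ∀ q : Fin p, z' q = z q - (if q = q2 then z q2 else 0) := by
      intro q
      by_cases hq : q = q2 <;> simp [hz'def, hq]
    rw [Finset.sum_congr rfl fun q _ => hpt q, Finset.sum_sub_distrib]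
    simp [Finset.sum_ite_eq', hz2]
  have := hopt z' y' T' x' hfeas'
  rw [hsum] at this
  linarith
end

section
/- For every integer-feasible solution (z, y, T, x) of Formulation 3 there exists an integer-feasible solution (z', y', T', x') of Formulation 3 with the same objective value ∑_q z' q = ∑_q z q that additionally satisfies the symmetry-elimination constraints T' q ≤ T' q' for all q ≤ q'. (Validity of the symmetry-elimination constraints (16): ordering the patterns by their dwell times removes permutation symmetry without changing the optimal value.) -/
/-- Validity of the symmetry-elimination constraints: every integer-feasible solution of
Formulation 3 can be reordered so that the dwell times are nondecreasing, keeping the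
same objective value. -/
theorem form3_symmetry_elimination_valid
    (n p M : ℕ) (hn : 1 ≤ n) (hp : 2 ≤ p) (hM : 1 ≤ M)
    (D : Fin n → ℕ) (hD : ∀ b, D b ≤ M)
    (adj : Fin n → Fin n → Prop) (hadjSymm : Symmetric adj) (hadjIrrefl : Irreflexive adj)
    (z : Fin p → ℝ) (y : Fin p → Fin n → ℝ) (T : Fin p → ℝ) (x : Fin p → Fin n → ℝ)
    (hfeas : Form3IntFeasible n p M D adj z y T x) :
    ∃ (z' : Fin p → ℝ) (y' : Fin p → Fin n → ℝ) (T' : Fin p → ℝ) (x' : Fin p → Fin n → ℝ),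
      Form3IntFeasible n p M D adj z' y' T' x' ∧
      (∑ q : Fin p, z' q = ∑ q : Fin p, z q) ∧
      (∀ q q' : Fin p, q ≤ q' → T' q ≤ T' q') := by
  obtain ⟨⟨hz, hy, hT, hx, h1, h2, h3, h4, h5, h6⟩, hzb, hyb⟩ := hfeas
  set σ := Tuple.sort T with hσ
  refine ⟨z ∘ σ, fun q => y (σ q), T ∘ σ, fun q => x (σ q), ⟨⟨?_, ?_, ?_, ?_, ?_, ?_, ?_, ?_, ?_, ?_⟩, ?_, ?_⟩, ?_, ?_⟩
  · exact fun q => hz (σ q)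
  · exact fun q => hy (σ q)
  · exact fun q => hT (σ q)
  · exact fun q => hx (σ q)
  · exact fun q => h1 (σ q)
  · exact fun q => h2 (σ q)
  · intro b
    simpa using (Equiv.sum_comp σ (fun q => x q b)).trans (h3 b)
  · exact fun q => h4 (σ q)
  · exact fun q => h5 (σ q)
  · exact fun q => h6 (σ q)
  · exact fun q => hzb (σ q)
  · exact fun q => hyb (σ q)
  · exact Equiv.sum_comp σ z
  · exact fun q q' h => Tuple.monotone_sort T h
end
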